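/- Suppose (p*, b*) is an optimal solution of the price-taker storage LP with strictly positive profit, and suppose the maximum price is attained at a unique interval t_max and the minimum price at a unique interval t_min. Then p*_{t_max} = P̄ or b*_{t_min} = P̄: the unit operates at full capacity either at the highest-price interval (discharging) or at the lowest-price interval (charging). -/

import Mathlib

def StorageFeasible (T : ℕ) (η Pm : ℝ) (p b : Fin T → ℝ) : Prop :=
  (∀ t, 0 ≤ p t ∧ p t ≤ Pm) ∧ (∀ t, 0 ≤ b t ∧ b t ≤ Pm) ∧
    (∑ t, (p t / η - b t * η)) = 0

lemma two_point_sum {T : ℕ} (a c : Fin T) (g : Fin T → ℝ) (x y : ℝ) :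
    ∑ t, (g t + ((if t = a then x else 0) + (if t = c then y else 0)))
      = (∑ t, g t) + (x + y) := by
  rw [Finset.sum_add_distrib, Finset.sum_add_distrib]
  simp [Finset.sum_ite_eq']

theorem taker_full_capacity_at_extreme_price
    (T : ℕ) (η Pm : ℝ) (lam : Fin T → ℝ) (p b : Fin T → ℝ) (tmax tmin : Fin T)
    (hη : 0 < η) (hη1 : η < 1) (hPm : 0 < Pm) (hlam : ∀ t, 0 ≤ lam t)
    (hmax : ∀ t, t ≠ tmax → lam t < lam tmax)
    (hmin : ∀ t, t ≠ tmin → lam tmin < lam t)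
    (hfeas : StorageFeasible T η Pm p b)
    (hopt : ∀ q c : Fin T → ℝ, StorageFeasible T η Pm q c →
      (∑ t, lam t * (q t - c t)) ≤ ∑ t, lam t * (p t - b t))
    (hpos : 0 < ∑ t, lam t * (p t - b t)) :
    p tmax = Pm ∨ b tmin = Pm := by
  obtain ⟨hp, hb, hcon⟩ := hfeas
  by_contra hcontra
  push_neg at hcontra
  obtain ⟨hpne, hbne⟩ := hcontra
  have hplt : p tmax < Pm := lt_of_le_of_ne (hp tmax).2 hpne
  have hblt : b tmin < Pm := lt_of_le_of_ne (hb tmin).2 hbne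
  -- Step 1: all discharge outside tmax is zero
  have hpzero : ∀ t, t ≠ tmax → p t = 0 := by
    intro t0 ht0
    by_contra hpt0
    have hpt0' : 0 < p t0 := lt_of_le_of_ne (hp t0).1 (Ne.symm hpt0)
    set ε : ℝ := min (Pm - p tmax) (p t0) with hε
    have hε0 : 0 < ε := lt_min (by linarith) hpt0'
    have hε1 : ε ≤ Pm - p tmax := min_le_left _ _
    have hε2 : ε ≤ p t0 := min_le_right _ _
    set q : Fin T → ℝ := fun s => if s = tmax then p s + ε else if s = t0 then p s - ε else p s with hqdef
    have hq : ∀ s, q s = p s + ((if s = tmax then ε else 0) + (if s = t0 then -ε else 0)) := by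
      intro s
      by_cases h1 : s = tmax <;> by_cases h2 : s = t0
      · exact absurd (h2 ▸ h1) ht0
      · simp [hqdef, h1, h2, ht0, Ne.symm ht0]
      · simp [hqdef, h1, h2, ht0, Ne.symm ht0]; ring
      · simp [hqdef, h1, h2, ht0, Ne.symm ht0]
    have hfeas' : StorageFeasible T η Pm q b := by
      refine ⟨?_, hb, ?_⟩
      · intro s
        rw [hq s]
        by_cases h1 : s = tmax <;> by_cases h2 : s = t0
        · exact absurd (h2 ▸ h1) ht0
        · rw [h1]; simp [(Ne.symm ht0 : tmax ≠ t0)]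
          exact ⟨by linarith [(hp tmax).1], by linarith⟩
        · rw [h2]; simp [(ht0 : t0 ≠ tmax)]
          exact ⟨by linarith, by linarith [(hp t0).2]⟩
        · simp [h1, h2, ht0, Ne.symm ht0]; exact hp s
      · have key : ∀ s, q s / η - b s * η
            = (p s / η - b s * η) + ((if s = tmax then ε / η else 0) + (if s = t0 then -(ε / η) else 0)) := by
          intro s
          rw [hq s]
          by_cases h1 : s = tmax <;> by_cases h2 : s = t0
          · exact absurd (h2 ▸ h1) ht0
          · simp [h1, h2, ht0, Ne.symm ht0]; ring
          · simp [h1, h2, ht0, Ne.symm ht0]; ring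
          · simp [h1, h2, ht0, Ne.symm ht0]
        rw [Finset.sum_congr rfl (fun s _ => key s), two_point_sum, hcon]
        ring
    have hineq := hopt q b hfeas'
    have hsum : ∑ t, lam t * (q t - b t)
        = (∑ t, lam t * (p t - b t)) + (lam tmax * ε + -(lam t0 * ε)) := by
      have key : ∀ s, lam s * (q s - b s)
          = lam s * (p s - b s) + ((if s = tmax then lam tmax * ε else 0) + (if s = t0 then -(lam t0 * ε) else 0)) := by
        intro s
        rw [hq s]
        by_cases h1 : s = tmax <;> by_cases h2 : s = t0
        · exact absurd (h2 ▸ h1) ht0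
        · rw [h1]; simp [(Ne.symm ht0 : tmax ≠ t0)]; ring
        · rw [h2]; simp [(ht0 : t0 ≠ tmax)]; ring
        · simp [h1, h2, ht0, Ne.symm ht0]
      rw [Finset.sum_congr rfl (fun s _ => key s), two_point_sum]
    rw [hsum] at hineq
    have hlt : lam t0 < lam tmax := hmax t0 ht0
    nlinarith
  -- Step 2: all charge outside tmin is zero
  have hbzero : ∀ t, t ≠ tmin → b t = 0 := by
    intro t0 ht0
    by_contra hbt0
    have hbt0' : 0 < b t0 := lt_of_le_of_ne (hb t0).1 (Ne.symm hbt0)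
    set ε : ℝ := min (Pm - b tmin) (b t0) with hε
    have hε0 : 0 < ε := lt_min (by linarith) hbt0'
    have hε1 : ε ≤ Pm - b tmin := min_le_left _ _
    have hε2 : ε ≤ b t0 := min_le_right _ _
    set c : Fin T → ℝ := fun s => if s = tmin then b s + ε else if s = t0 then b s - ε else b s with hcdef
    have hc : ∀ s, c s = b s + ((if s = tmin then ε else 0) + (if s = t0 then -ε else 0)) := by
      intro s
      by_cases h1 : s = tmin <;> by_cases h2 : s = t0
      · exact absurd (h2 ▸ h1) ht0
      · simp [hcdef, h1, h2, ht0, Ne.symm ht0]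
      · simp [hcdef, h1, h2, ht0, Ne.symm ht0]; ring
      · simp [hcdef, h1, h2, ht0, Ne.symm ht0]
    have hfeas' : StorageFeasible T η Pm p c := by
      refine ⟨hp, ?_, ?_⟩
      · intro s
        rw [hc s]
        by_cases h1 : s = tmin <;> by_cases h2 : s = t0
        · exact absurd (h2 ▸ h1) ht0
        · rw [h1]; simp [(Ne.symm ht0 : tmin ≠ t0)]
          exact ⟨by linarith [(hb tmin).1], by linarith⟩
        · rw [h2]; simp [(ht0 : t0 ≠ tmin)]
          exact ⟨by linarith, by linarith [(hb t0).2]⟩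
        · simp [h1, h2, ht0, Ne.symm ht0]; exact hb s
      · have key : ∀ s, p s / η - c s * η
            = (p s / η - b s * η) + ((if s = tmin then -(ε * η) else 0) + (if s = t0 then ε * η else 0)) := by
          intro s
          rw [hc s]
          by_cases h1 : s = tmin <;> by_cases h2 : s = t0
          · exact absurd (h2 ▸ h1) ht0
          · simp [h1, h2, ht0, Ne.symm ht0]; ring
          · simp [h1, h2, ht0, Ne.symm ht0]; ring
          · simp [h1, h2, ht0, Ne.symm ht0]
        rw [Finset.sum_congr rfl (fun s _ => key s), two_point_sum, hcon]
        ring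
    have hineq := hopt p c hfeas'
    have hsum : ∑ t, lam t * (p t - c t)
        = (∑ t, lam t * (p t - b t)) + (-(lam tmin * ε) + lam t0 * ε) := by
      have key : ∀ s, lam s * (p s - c s)
          = lam s * (p s - b s) + ((if s = tmin then -(lam tmin * ε) else 0) + (if s = t0 then lam t0 * ε else 0)) := by
        intro s
        rw [hc s]
        by_cases h1 : s = tmin <;> by_cases h2 : s = t0
        · exact absurd (h2 ▸ h1) ht0
        · rw [h1]; simp [(Ne.symm ht0 : tmin ≠ t0)]; ring
        · rw [h2]; simp [(ht0 : t0 ≠ tmin)]; ring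
        · simp [h1, h2, ht0, Ne.symm ht0]
      rw [Finset.sum_congr rfl (fun s _ => key s), two_point_sum]
    rw [hsum] at hineq
    have hlt : lam tmin < lam t0 := hmin t0 ht0
    nlinarith
  -- Step 3: scale up
  set δ : ℝ := min ((Pm - p tmax) / Pm) ((Pm - b tmin) / Pm) with hδ
  have hδ0 : 0 < δ := lt_min (div_pos (by linarith) hPm) (div_pos (by linarith) hPm)
  have hδ1 : δ ≤ (Pm - p tmax) / Pm := min_le_left _ _
  have hδ2 : δ ≤ (Pm - b tmin) / Pm := min_le_right _ _
  have hδ1' : δ * Pm ≤ Pm - p tmax := by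
    calc δ * Pm ≤ ((Pm - p tmax) / Pm) * Pm := by nlinarith
    _ = Pm - p tmax := by field_simp
  have hδ2' : δ * Pm ≤ Pm - b tmin := by
    calc δ * Pm ≤ ((Pm - b tmin) / Pm) * Pm := by nlinarith
    _ = Pm - b tmin := by field_simp
  have hfeas' : StorageFeasible T η Pm (fun s => (1 + δ) * p s) (fun s => (1 + δ) * b s) := by
    refine ⟨?_, ?_, ?_⟩
    · intro s
      show 0 ≤ (1 + δ) * p s ∧ (1 + δ) * p s ≤ Pm
      by_cases h1 : s = tmax
      · rw [h1]
        exact ⟨by nlinarith [(hp tmax).1], by nlinarith [(hp tmax).1, (hp tmax).2]⟩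
      · rw [hpzero s h1]
        exact ⟨by norm_num, by linarith⟩
    · intro s
      show 0 ≤ (1 + δ) * b s ∧ (1 + δ) * b s ≤ Pm
      by_cases h1 : s = tmin
      · rw [h1]
        exact ⟨by nlinarith [(hb tmin).1], by nlinarith [(hb tmin).1, (hb tmin).2]⟩
      · rw [hbzero s h1]
        exact ⟨by norm_num, by linarith⟩
    · have key : ∀ s : Fin T, (1 + δ) * p s / η - (1 + δ) * b s * η = (1 + δ) * (p s / η - b s * η) := by
        intro s; field_simp
      calc ∑ s, ((1 + δ) * p s / η - (1 + δ) * b s * η)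
          = ∑ s, (1 + δ) * (p s / η - b s * η) := Finset.sum_congr rfl (fun s _ => key s)
        _ = (1 + δ) * ∑ s, (p s / η - b s * η) := by rw [Finset.mul_sum]
        _ = 0 := by rw [hcon, mul_zero]
  have hineq := hopt _ _ hfeas'
  have hsum : ∑ t, lam t * ((1 + δ) * p t - (1 + δ) * b t)
      = (1 + δ) * ∑ t, lam t * (p t - b t) := by
    rw [Finset.mul_sum]
    exact Finset.sum_congr rfl (fun s _ => by ring)
  rw [hsum] at hineq
  nlinarith
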